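/- Let S be a subset of nodes of a weighted directed graph such that G[S] has a directed spanning tree with root r, and such that r is the only node of S with incoming edges from V \ S. If the states of all nodes outside S converge to constants x_j^ss, then the states of all nodes in S under ẋ = -Lx converge to the common value (Σ_{j ∈ V\S} a_{rj} x_j^ss) / (Σ_{j ∈ V\S} a_{rj}), where the sums range over neighbors of r outside S. -/

import Mathlib

open Filter Topology

private lemma expComp {y f : ℝ → ℝ} {c d T t : ℝ} (hc : 0 < c) (hT : T ≤ t)
    (hy : ∀ s ∈ Set.Icc T t, HasDerivAt y (f s) s)
    (hf : ∀ s ∈ Set.Icc T t, f s ≤ -c * y s + d) :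
    y t ≤ (y T - d / c) * Real.exp (-(c * (t - T))) + d / c := by
  set g : ℝ → ℝ := fun s => (y s - d / c) * Real.exp (c * (s - T)) with hg
  have hgd : ∀ s ∈ Set.Icc T t,
      HasDerivAt g ((f s + c * y s - d) * Real.exp (c * (s - T))) s := by
    intro s hs
    have h1 : HasDerivAt (fun s => y s - d / c) (f s) s := (hy s hs).sub_const _
    have h2 : HasDerivAt (fun s : ℝ => Real.exp (c * (s - T)))
        (Real.exp (c * (s - T)) * c) s := by
      have h3 : HasDerivAt (fun s : ℝ => c * (s - T)) c s := by
        simpa using ((hasDerivAt_id s).sub_const T).const_mul c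
      exact h3.exp
    have := h1.mul h2
    refine this.congr_deriv ?_
    have hcne : c ≠ 0 := hc.ne'
    field_simp
    ring
  have hga : AntitoneOn g (Set.Icc T t) := by
    apply antitoneOn_of_deriv_nonpos (convex_Icc T t)
    · intro s hs
      exact (hgd s hs).continuousAt.continuousWithinAt
    · intro s hs
      rw [interior_Icc] at hs
      exact ((hgd s (Set.Ioo_subset_Icc_self hs)).differentiableAt).differentiableWithinAt
    · intro s hs
      rw [interior_Icc] at hs
      have hs' : s ∈ Set.Icc T t := Set.Ioo_subset_Icc_self hs
      rw [(hgd s hs').deriv]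
      have h0 : f s + c * y s - d ≤ 0 := by have := hf s hs'; linarith
      exact mul_nonpos_of_nonpos_of_nonneg h0 (Real.exp_pos _).le
  have hle : g t ≤ g T := hga (Set.left_mem_Icc.2 hT) (Set.right_mem_Icc.2 hT) hT
  have hgT : g T = y T - d / c := by simp [hg]
  rw [hgT] at hle
  have hE : (0:ℝ) < Real.exp (-(c * (t - T))) := Real.exp_pos _
  have := mul_le_mul_of_nonneg_right hle hE.le
  have hmul : Real.exp (c * (t - T)) * Real.exp (-(c * (t - T))) = 1 := by
    rw [← Real.exp_add]; simp
  have hgt : g t = (y t - d / c) * Real.exp (c * (t - T)) := rfl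
  rw [hgt] at this
  rw [mul_assoc, hmul, mul_one] at this
  linarith


private lemma scalarUpper {y u : ℝ → ℝ} {c l : ℝ} (hc : 0 < c)
    (hy : ∀ t, HasDerivAt y (u t - c * y t) t)
    (hu : Tendsto u atTop (𝓝 (c * l))) :
    ∀ ε > 0, ∀ᶠ t in atTop, y t < l + ε := by
  intro ε hε
  have h2 : (0:ℝ) < c * (ε/2) := by positivity
  obtain ⟨T, hT⟩ := (Metric.tendsto_atTop.1 hu) (c * (ε/2)) h2
  have hdc : (c * (l + ε/2)) / c = l + ε/2 := mul_div_cancel_left₀ _ hc.ne'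
  have hub : ∀ t ≥ T, y t ≤ (y T - (l + ε/2)) * Real.exp (-(c * (t - T))) + (l + ε/2) := by
    intro t ht
    have h := expComp (y := y) (f := fun s => u s - c * y s) (d := c * (l + ε/2)) hc ht
      (fun s _ => hy s) ?_
    · rwa [hdc] at h
    · intro s hs
      have h3 := hT s hs.1
      rw [Real.dist_eq] at h3
      have h4 := abs_lt.1 h3
      nlinarith [h4.1, h4.2]
  have hdecay : Tendsto (fun t => (y T - (l + ε/2)) * Real.exp (-(c * (t - T)))) atTop (𝓝 0) := by
    have h5 : Tendsto (fun t : ℝ => -(c * (t - T))) atTop atBot := by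
      apply tendsto_neg_atBot_iff.2
      exact Tendsto.const_mul_atTop hc (tendsto_atTop_add_const_right _ (-T) tendsto_id)
    have h6 := (Real.tendsto_exp_atBot.comp h5).const_mul (y T - (l + ε/2))
    simpa using h6
  have h6 : ∀ᶠ t in atTop, (y T - (l + ε/2)) * Real.exp (-(c * (t - T))) < ε/2 :=
    hdecay.eventually_lt_const (by linarith)
  filter_upwards [h6, eventually_ge_atTop T] with t h7 h8
  have := hub t h8
  linarith


private lemma consensusUpper {V : Type*} [Fintype V] [DecidableEq V] (A : Matrix V V ℝ)
    (hA : ∀ i j, 0 ≤ A i j) (S : Finset V) (r : V) (hr : r ∈ S)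
    (hroot : ∀ j ∈ S, Relation.ReflTransGen (fun a b => a ∈ S ∧ b ∈ S ∧ 0 < A b a) r j)
    (hrNoInS : ∀ j ∈ S, A r j = 0)
    (w : ℝ → V → ℝ)
    (hw : ∀ i ∈ S, i ≠ r → ∀ t,
      HasDerivAt (fun s => w s i) (∑ j ∈ S, A i j * (w t j - w t i)) t)
    (ε : ℝ) (hε : 0 < ε) (T0 : ℝ) (hre : ∀ t ≥ T0, w t r ≤ ε) :
    ∀ i ∈ S, ∀ᶠ t in atTop, w t i ≤ 2 * ε := by
  classical
  set cd : V → ℝ := fun i => ∑ j ∈ S, A i j with hcd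
  -- positivity of in-degree for non-root nodes
  have hci : ∀ i ∈ S, i ≠ r → 0 < cd i := by
    intro i hi hir
    rcases (hroot i hi).cases_tail with h | ⟨j, _, hjS, _, hAij⟩
    · exact absurd h hir
    · exact Finset.sum_pos' (fun j _ => hA i j) ⟨j, hjS, hAij⟩
  have hcont : ∀ i ∈ S, i ≠ r → Continuous (fun t => w t i) := fun i hi hir =>
    continuous_iff_continuousAt.2 fun t => (hw i hi hir t).continuousAt
  -- per-node comparison
  have hnode : ∀ i ∈ S, i ≠ r → ∀ (b : V → ℝ) (T t : ℝ), T ≤ t →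
      (∀ j ∈ S, ∀ s ∈ Set.Icc T t, w s j ≤ b j) →
      w t i ≤ (w T i - (∑ j ∈ S, A i j * b j) / cd i) * Real.exp (-(cd i * (t - T)))
        + (∑ j ∈ S, A i j * b j) / cd i := by
    intro i hi hir b T t hTt hb
    refine expComp (hci i hi hir) hTt (fun s _ => hw i hi hir s) ?_
    intro s hs
    calc ∑ j ∈ S, A i j * (w s j - w s i) ≤ ∑ j ∈ S, A i j * (b j - w s i) := by
          refine Finset.sum_le_sum fun j hj => mul_le_mul_of_nonneg_left ?_ (hA i j)
          have := hb j hj s hs; linarith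
      _ = -cd i * w s i + ∑ j ∈ S, A i j * b j := by
          simp only [mul_sub]
          rw [Finset.sum_sub_distrib, ← Finset.sum_mul]
          ring
  -- invariance
  have hinv : ∀ D, ε ≤ D → (∀ i ∈ S, w T0 i ≤ D) → ∀ t ≥ T0, ∀ i ∈ S, w t i ≤ D := by
    intro D hεD h0 t ht i hi
    by_cases hir : i = r
    · subst hir; exact (hre t ht).trans hεD
    refine le_of_forall_pos_le_add ?_
    intro δ hδ
    by_contra hcon
    push_neg at hcon
    set E : Set ℝ := ⋃ k ∈ S.erase r, {s : ℝ | T0 ≤ s ∧ D + δ ≤ w s k} with hE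
    have hmemE : ∀ s : ℝ, s ∈ E ↔ ∃ k ∈ S.erase r, T0 ≤ s ∧ D + δ ≤ w s k := by
      intro s
      simp only [hE, Set.mem_iUnion, Set.mem_setOf_eq, exists_prop]
      try tauto
    have hEclosed : IsClosed E := by
      refine Set.Finite.isClosed_biUnion (S.erase r).finite_toSet fun k hk => ?_
      obtain ⟨hkr, hkS⟩ := Finset.mem_erase.1 hk
      exact IsClosed.inter isClosed_Ici (isClosed_le continuous_const (hcont k hkS hkr))
    have hEne : E.Nonempty :=
      ⟨t, (hmemE t).2 ⟨i, Finset.mem_erase.2 ⟨hir, hi⟩, ht, hcon.le⟩⟩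
    have hEbdd : BddBelow E := ⟨T0, fun s hs => ((hmemE s).1 hs).choose_spec.2.1⟩
    set t' := sInf E with ht'
    have ht'E : t' ∈ E := hEclosed.csInf_mem hEne hEbdd
    obtain ⟨k, hk, hT0t', hwk⟩ := (hmemE t').1 ht'E
    obtain ⟨hkr, hkS⟩ := Finset.mem_erase.1 hk
    have ht'gt : T0 < t' := by
      rcases lt_or_eq_of_le hT0t' with h | h
      · exact h
      · exfalso; rw [← h] at hwk; have := h0 k hkS; linarith
    -- bound on [T0, t']
    have hlt : ∀ s, T0 ≤ s → s < t' → ∀ j ∈ S, w s j ≤ D + δ := by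
      intro s hs hst j hj
      by_cases hjr : j = r
      · subst hjr; have := hre s hs; linarith
      · have hsE : s ∉ E := fun hmem => absurd (csInf_le hEbdd hmem) (not_le.2 hst)
        by_contra hcon2
        exact hsE ((hmemE s).2 ⟨j, Finset.mem_erase.2 ⟨hjr, hj⟩, hs, (not_le.1 hcon2).le⟩)
    have hbound : ∀ j ∈ S, ∀ s ∈ Set.Icc T0 t', w s j ≤ D + δ := by
      intro j hj s hs
      rcases lt_or_eq_of_le hs.2 with h | h
      · exact hlt s hs.1 h j hj
      · by_cases hjr : j = r
        · subst hjr; have := hre s hs.1; linarith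
        · have htd : Tendsto (fun u => w u j) (𝓝[<] t') (𝓝 (w t' j)) :=
            ((hcont j hj hjr).tendsto t').mono_left nhdsWithin_le_nhds
          rw [h]
          refine le_of_tendsto htd ?_
          filter_upwards [Ioo_mem_nhdsLT_of_mem (⟨ht'gt, le_refl _⟩ : t' ∈ Set.Ioc T0 t')]
            with u hu
          exact hlt u hu.1.le hu.2 j hj
    -- contradiction via hnode
    have hd : (∑ j ∈ S, A k j * (D + δ)) / cd k = D + δ := by
      rw [← Finset.sum_mul]
      exact mul_div_cancel_left₀ _ (hci k hkS hkr).ne'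
    have h2 := hnode k hkS hkr (fun _ => D + δ) T0 t' hT0t' hbound
    rw [hd] at h2
    have h3 : w T0 k - (D + δ) < 0 := by have := h0 k hkS; linarith
    have h4 := mul_neg_of_neg_of_pos h3 (Real.exp_pos (-(cd k * (t' - T0))))
    linarith
  -- uniform contraction constant
  obtain ⟨μ, hμ0, hμ1, hμ⟩ : ∃ μ : ℝ, 0 < μ ∧ μ ≤ 1 ∧ ∀ i ∈ S, i ≠ r → ∀ j ∈ S, 0 < A i j →
      μ ≤ A i j / cd i * (1 - Real.exp (-cd i)) := by
    set P : Finset (V × V) := (S ×ˢ S).filter (fun p => p.1 ≠ r ∧ 0 < A p.1 p.2) with hP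
    have hmemP : ∀ p : V × V, p ∈ P ↔ p.1 ∈ S ∧ p.2 ∈ S ∧ p.1 ≠ r ∧ 0 < A p.1 p.2 := by
      intro p; simp [hP, Finset.mem_filter, Finset.mem_product, and_assoc]
    have hgpos : ∀ p ∈ P, 0 < A p.1 p.2 / cd p.1 * (1 - Real.exp (-cd p.1)) := by
      intro p hp
      obtain ⟨h1, h2, h3, h4⟩ := (hmemP p).1 hp
      have hc := hci p.1 h1 h3
      have he : Real.exp (-cd p.1) < 1 := Real.exp_lt_one_iff.2 (by linarith)
      have : 0 < A p.1 p.2 / cd p.1 := div_pos h4 hc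
      nlinarith
    by_cases hPne : P.Nonempty
    · refine ⟨min 1 (P.inf' hPne fun p => A p.1 p.2 / cd p.1 * (1 - Real.exp (-cd p.1))),
        lt_min one_pos ((Finset.lt_inf'_iff hPne).2 (hgpos)), min_le_left _ _, ?_⟩
      intro i hi hir j hj hAij
      exact (min_le_right _ _).trans
        (Finset.inf'_le _ ((hmemP (i, j)).2 ⟨hi, hj, hir, hAij⟩))
    · refine ⟨1, one_pos, le_refl 1, fun i hi hir j hj hAij => absurd ?_ hPne⟩
      exact ⟨(i, j), (hmemP (i, j)).2 ⟨hi, hj, hir, hAij⟩⟩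
  -- per-node geometric bound via path induction
  have key : ∀ i, Relation.ReflTransGen (fun a b => a ∈ S ∧ b ∈ S ∧ 0 < A b a) r i →
      ∃ m : ℕ, ∀ T D, T0 ≤ T → ε ≤ D → (∀ t ≥ T, ∀ j ∈ S, w t j ≤ D) →
        ∀ t ≥ T + (m : ℝ), w t i ≤ D - μ ^ m * (D - ε) := by
    intro i hrel
    induction hrel with
    | refl =>
      refine ⟨0, fun T D hT hεD _ t ht => ?_⟩
      have ht0 : T0 ≤ t := le_trans hT (by simpa using ht)
      have := hre t ht0
      simp only [pow_zero, one_mul]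
      linarith
    | @tail p q hrel hstep ih =>
      obtain ⟨hpS, hqS, hAqp⟩ := hstep
      obtain ⟨m, ihm⟩ := ih
      have hqr : q ≠ r := by
        intro h; subst h; rw [hrNoInS p hpS] at hAqp; exact lt_irrefl 0 hAqp
      refine ⟨m + 1, ?_⟩
      intro T D hT hεD hbnd t ht
      push_cast at ht
      set B := D - μ ^ m * (D - ε) with hB
      have hεD' : 0 ≤ D - ε := by linarith
      have hμm0 : 0 ≤ μ ^ m := pow_nonneg hμ0.le m
      have hμm1 : μ ^ m ≤ 1 := pow_le_one₀ hμ0.le hμ1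
      have hBD : B ≤ D := by nlinarith
      have hjB : ∀ s ≥ T + (m : ℝ), w s p ≤ B := fun s hs => ihm T D hT hεD hbnd s hs
      have hcq := hci q hqS hqr
      -- apply hnode from T+m to t with targeted bound
      set b : V → ℝ := fun k => if k = p then B else D with hbdef
      have hTm_t : T + (m : ℝ) ≤ t := by linarith
      have hbok : ∀ j ∈ S, ∀ s ∈ Set.Icc (T + (m : ℝ)) t, w s j ≤ b j := by
        intro j hj s hs
        by_cases hjp : j = p
        · subst hjp; simp only [hbdef, if_pos rfl]; exact hjB s hs.1
        · simp only [hbdef, if_neg hjp]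
          refine hbnd s ?_ j hj
          have : (0:ℝ) ≤ (m:ℝ) := Nat.cast_nonneg m
          linarith [hs.1]
      have h2 := hnode q hqS hqr b (T + (m : ℝ)) t hTm_t hbok
      set d := ∑ j ∈ S, A q j * b j with hd
      have hdsplit : d = cd q * D - A q p * (D - B) := by
        rw [hd]
        calc ∑ j ∈ S, A q j * b j
            = ∑ j ∈ S, (A q j * D - if j = p then A q j * (D - B) else 0) := by
              refine Finset.sum_congr rfl fun j hj => ?_
              simp only [hbdef]
              split_ifs with h
              · ring
              · ring
          _ = cd q * D - A q p * (D - B) := by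
              rw [Finset.sum_sub_distrib, ← Finset.sum_mul,
                Finset.sum_ite_eq' S p (fun j => A q j * (D - B)), if_pos hpS]
      have hdc : d / cd q = D - A q p / cd q * (D - B) := by
        rw [hdsplit]; field_simp
      set θ := A q p / cd q with hθ
      have hθ0 : 0 ≤ θ := div_nonneg (hA q p) hcq.le
      have hDB : 0 ≤ D - B := by rw [hB]; nlinarith
      -- bound the exponential
      have hexple : Real.exp (-(cd q * (t - (T + (m:ℝ))))) ≤ Real.exp (-cd q) := by
        apply Real.exp_le_exp.2
        nlinarith
      have hexppos : 0 < Real.exp (-(cd q * (t - (T + (m:ℝ))))) := Real.exp_pos _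
      have hwTm : w (T + (m:ℝ)) q ≤ D := by
        refine hbnd _ ?_ q hqS
        have : (0:ℝ) ≤ (m:ℝ) := Nat.cast_nonneg m
        linarith
      have h5 : (w (T + (m:ℝ)) q - d / cd q) * Real.exp (-(cd q * (t - (T + (m:ℝ)))))
          ≤ (D - d / cd q) * Real.exp (-(cd q * (t - (T + (m:ℝ))))) :=
        mul_le_mul_of_nonneg_right (by linarith) hexppos.le
      have h6 : D - d / cd q = θ * (D - B) := by rw [hdc]; ring
      have h7 : θ * (D - B) * Real.exp (-(cd q * (t - (T + (m:ℝ)))))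
          ≤ θ * (D - B) * Real.exp (-cd q) :=
        mul_le_mul_of_nonneg_left hexple (mul_nonneg hθ0 hDB)
      have hμle : μ ≤ θ * (1 - Real.exp (-cd q)) := hμ q hqS hqr p hpS hAqp
      have h8 : μ * (D - B) ≤ θ * (1 - Real.exp (-cd q)) * (D - B) :=
        mul_le_mul_of_nonneg_right hμle hDB
      have hfin : w t q ≤ D - μ * (D - B) := by
        rw [h6] at h5
        rw [hdc] at h2 h5
        have e1 : w t q ≤ θ * (D - B) * Real.exp (-cd q) + (D - θ * (D - B)) := by
          linarith
        have e2 : θ * (D - B) * Real.exp (-cd q) + (D - θ * (D - B))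
            = D - θ * (1 - Real.exp (-cd q)) * (D - B) := by ring
        rw [e2] at e1
        linarith
      have : D - μ * (D - B) = D - μ ^ (m + 1) * (D - ε) := by
        rw [hB, pow_succ]; ring
      linarith
  -- uniform N
  have hgb : ∀ i : V, ∃ m : ℕ, i ∈ S → ∀ T D, T0 ≤ T → ε ≤ D →
      (∀ t ≥ T, ∀ j ∈ S, w t j ≤ D) →
      ∀ t ≥ T + (m : ℝ), w t i ≤ D - μ ^ m * (D - ε) := by
    intro i
    by_cases hi : i ∈ S
    · obtain ⟨m, hm⟩ := key i (hroot i hi); exact ⟨m, fun _ => hm⟩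
    · exact ⟨0, fun h => absurd h hi⟩
  choose mfun hm using hgb
  set N := Finset.univ.sup mfun with hN
  have hstep : ∀ T D, T0 ≤ T → ε ≤ D → (∀ t ≥ T, ∀ j ∈ S, w t j ≤ D) →
      ∀ t ≥ T + (N : ℝ), ∀ i ∈ S, w t i ≤ D - μ ^ N * (D - ε) := by
    intro T D hT hεD hbnd t ht i hi
    have hmN : mfun i ≤ N := Finset.le_sup (Finset.mem_univ i)
    have hcast : (mfun i : ℝ) ≤ (N : ℝ) := Nat.cast_le.2 hmN
    have h1 := hm i hi T D hT hεD hbnd t (le_trans (by linarith) ht)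
    have h2 : μ ^ N ≤ μ ^ mfun i := pow_le_pow_of_le_one hμ0.le hμ1 hmN
    nlinarith [h1, mul_le_mul_of_nonneg_right h2 (by linarith : (0:ℝ) ≤ D - ε)]
  -- iterate
  set D0 := max ε (S.sup' ⟨r, hr⟩ fun i => w T0 i) with hD0
  have hinv0 : ∀ t ≥ T0, ∀ i ∈ S, w t i ≤ D0 :=
    hinv D0 (le_max_left _ _)
      (fun i hi => le_trans (Finset.le_sup' _ hi) (le_max_right _ _))
  set qq := μ ^ N with hqq
  have hq0 : 0 < qq := pow_pos hμ0 N
  have hq1 : qq ≤ 1 := pow_le_one₀ hμ0.le hμ1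
  have hD0ε : ε ≤ D0 := le_max_left _ _
  have hiter : ∀ k : ℕ, ∀ t ≥ T0 + (k : ℝ) * (N : ℝ), ∀ i ∈ S,
      w t i ≤ ε + (1 - qq) ^ k * (D0 - ε) := by
    intro k
    induction k with
    | zero => intro t ht i hi; simpa using hinv0 t (by simpa using ht) i hi
    | succ k ihk =>
      intro t ht i hi
      have hDk : ε ≤ ε + (1 - qq) ^ k * (D0 - ε) := by
        have : (0:ℝ) ≤ (1 - qq) ^ k := pow_nonneg (by linarith) k
        nlinarith
      have hT' : T0 ≤ T0 + (k : ℝ) * (N : ℝ) := by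
        have : (0:ℝ) ≤ (k : ℝ) * (N : ℝ) := by positivity
        linarith
      have h1 := hstep (T0 + (k : ℝ) * (N : ℝ)) (ε + (1 - qq) ^ k * (D0 - ε)) hT' hDk
        (fun s hs j hj => ihk s hs j hj) t (by push_cast at ht ⊢; linarith) i hi
      have : ε + (1 - qq) ^ k * (D0 - ε) - qq * (ε + (1 - qq) ^ k * (D0 - ε) - ε)
          = ε + (1 - qq) ^ (k + 1) * (D0 - ε) := by rw [pow_succ]; ring
      nlinarith [h1]
  -- conclude
  intro i hi
  have hlim : Tendsto (fun k : ℕ => (1 - qq) ^ k * (D0 - ε)) atTop (𝓝 0) := by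
    have := tendsto_pow_atTop_nhds_zero_of_lt_one (by linarith : (0:ℝ) ≤ 1 - qq)
      (by linarith : 1 - qq < 1)
    simpa using this.mul_const (D0 - ε)
  obtain ⟨k, hk⟩ := (hlim.eventually_lt_const hε).exists
  filter_upwards [eventually_ge_atTop (T0 + (k : ℝ) * (N : ℝ))] with t ht
  have := hiter k t ht i hi
  linarith


/-- Let `S` be a node set whose induced subgraph has a directed spanning tree
rooted at `r` (with `r` having no incoming edges from within `S`), `r` being the
only node of `S` with incoming edges from outside `S` (and having at least one).
If the states of the nodes outside `S` converge to constants `xss j`, then under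
`ẋᵢ = Σⱼ aᵢⱼ (xⱼ - xᵢ)` every node of `S` converges to
`(Σ_{j∉S} a_{rj} xss j) / (Σ_{j∉S} a_{rj})`. -/
theorem stmt10 {V : Type*} [Fintype V] [DecidableEq V] (A : Matrix V V ℝ)
    (hA : ∀ i j, 0 ≤ A i j)
    (S : Finset V) (r : V) (hr : r ∈ S)
    (hroot : ∀ j ∈ S,
      Relation.ReflTransGen (fun a b => a ∈ S ∧ b ∈ S ∧ 0 < A b a) r j)
    (hrNoInS : ∀ j ∈ S, A r j = 0)
    (honly : ∀ i ∈ S, i ≠ r → ∀ j, j ∉ S → A i j = 0)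
    (hrOut : ∃ j, j ∉ S ∧ 0 < A r j)
    (x : ℝ → V → ℝ)
    (hx : ∀ (i : V) (t : ℝ),
      HasDerivAt (fun s => x s i) (∑ j, A i j * (x t j - x t i)) t)
    (xss : V → ℝ)
    (hconv : ∀ j, j ∉ S → Tendsto (fun t => x t j) atTop (𝓝 (xss j))) :
    ∀ i ∈ S, Tendsto (fun t => x t i) atTop
      (𝓝 ((∑ j ∈ Finset.univ.filter (fun j => j ∉ S), A r j * xss j) /
          (∑ j ∈ Finset.univ.filter (fun j => j ∉ S), A r j))) := by
  classical
  set c0 : ℝ := ∑ j ∈ Finset.univ.filter (fun j => j ∉ S), A r j with hc0def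
  have hc0 : 0 < c0 := by
    obtain ⟨j0, hj0S, hj0pos⟩ := hrOut
    exact Finset.sum_pos' (fun j _ => hA r j)
      ⟨j0, Finset.mem_filter.2 ⟨Finset.mem_univ _, hj0S⟩, hj0pos⟩
  set L : ℝ := (∑ j ∈ Finset.univ.filter (fun j => j ∉ S), A r j * xss j) / c0 with hLdef
  -- Step 1 : the root converges to L
  set u : ℝ → ℝ := fun t => ∑ j ∈ Finset.univ.filter (fun j => j ∉ S), A r j * x t j with hudef
  have hderiv_eq : ∀ t, (∑ j, A r j * (x t j - x t r)) = u t - c0 * x t r := by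
    intro t
    rw [← Finset.sum_filter_add_sum_filter_not Finset.univ (fun j => j ∉ S)
      (fun j => A r j * (x t j - x t r))]
    have h2 : ∑ j ∈ Finset.univ.filter (fun j => ¬ j ∉ S), A r j * (x t j - x t r) = 0 := by
      refine Finset.sum_eq_zero fun j hj => ?_
      have hjS : j ∈ S := not_not.1 (Finset.mem_filter.1 hj).2
      rw [hrNoInS j hjS, zero_mul]
    rw [h2, add_zero]
    simp only [hudef, hc0def, mul_sub]
    rw [Finset.sum_sub_distrib, ← Finset.sum_mul]
  have hyr : ∀ t, HasDerivAt (fun s => x s r) (u t - c0 * x t r) t := by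
    intro t; rw [← hderiv_eq t]; exact hx r t
  have hu : Tendsto u atTop (𝓝 (c0 * L)) := by
    have hL : c0 * L = ∑ j ∈ Finset.univ.filter (fun j => j ∉ S), A r j * xss j := by
      rw [hLdef, mul_div_cancel₀ _ hc0.ne']
    rw [hL]
    exact tendsto_finset_sum _ fun j hj =>
      ((hconv j (Finset.mem_filter.1 hj).2).const_mul _)
  have hxr : Tendsto (fun t => x t r) atTop (𝓝 L) := by
    rw [Metric.tendsto_atTop]
    intro ε hε
    have h1 := scalarUpper hc0 hyr hu ε hε
    have hyr' : ∀ t, HasDerivAt (fun s => -x s r) ((fun t => -u t) t - c0 * (-(x t r))) t := by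
      intro t
      have := (hyr t).neg
      refine this.congr_deriv ?_
      ring
    have hu' : Tendsto (fun t => -u t) atTop (𝓝 (c0 * (-L))) := by
      have := hu.neg
      convert this using 2
      ring
    have h2 := scalarUpper hc0 hyr' hu' ε hε
    rw [Filter.eventually_atTop] at h1 h2
    obtain ⟨T1, hT1⟩ := h1
    obtain ⟨T2, hT2⟩ := h2
    refine ⟨max T1 T2, fun t ht => ?_⟩
    have e1 := hT1 t (le_trans (le_max_left _ _) ht)
    have e2 := hT2 t (le_trans (le_max_right _ _) ht)
    rw [Real.dist_eq, abs_sub_lt_iff]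
    constructor <;> linarith
  -- Step 2 : everybody in S converges
  intro i hi
  rw [Metric.tendsto_atTop]
  intro ε hε
  have hε5 : 0 < ε / 5 := by linarith
  obtain ⟨T0, hT0⟩ : ∃ T0, ∀ t ≥ T0, |x t r - L| ≤ ε / 5 := by
    have := Metric.tendsto_atTop.1 hxr (ε / 5) hε5
    obtain ⟨T0, h⟩ := this
    exact ⟨T0, fun t ht => by have := h t ht; rw [Real.dist_eq] at this; linarith⟩
  have hsum_eq : ∀ k ∈ S, k ≠ r → ∀ t,
      (∑ j, A k j * (x t j - x t k)) = ∑ j ∈ S, A k j * (x t j - x t k) := by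
    intro k hk hkr t
    symm
    refine Finset.sum_subset (S.subset_univ) fun j _ hjS => ?_
    rw [honly k hk hkr j hjS, zero_mul]
  have hwup : ∀ k ∈ S, k ≠ r → ∀ t, HasDerivAt (fun s => x s k - L)
      (∑ j ∈ S, A k j * ((x t j - L) - (x t k - L))) t := by
    intro k hk hkr t
    have h := (hx k t).sub_const L
    rw [hsum_eq k hk hkr t] at h
    refine h.congr_deriv ?_
    exact Finset.sum_congr rfl fun j _ => by ring
  have hwdn : ∀ k ∈ S, k ≠ r → ∀ t, HasDerivAt (fun s => L - x s k)
      (∑ j ∈ S, A k j * ((L - x t j) - (L - x t k))) t := by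
    intro k hk hkr t
    have h := ((hx k t).neg).const_add L
    rw [hsum_eq k hk hkr t] at h
    refine h.congr_deriv ?_
    rw [← Finset.sum_neg_distrib]
    exact Finset.sum_congr rfl fun j _ => by ring
  have up := consensusUpper A hA S r hr hroot hrNoInS (fun t k => x t k - L) hwup
    (ε / 5) hε5 T0 (fun t ht => (abs_le.1 (hT0 t ht)).2) i hi
  have dn := consensusUpper A hA S r hr hroot hrNoInS (fun t k => L - x t k) hwdn
    (ε / 5) hε5 T0 (fun t ht => by have := (abs_le.1 (hT0 t ht)).1; linarith) i hi
  rw [Filter.eventually_atTop] at up dn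
  obtain ⟨T1, hT1⟩ := up
  obtain ⟨T2, hT2⟩ := dn
  refine ⟨max T1 T2, fun t ht => ?_⟩
  have e1 := hT1 t (le_trans (le_max_left _ _) ht)
  have e2 := hT2 t (le_trans (le_max_right _ _) ht)
  rw [Real.dist_eq, abs_sub_lt_iff]
  constructor <;> [linarith; linarith]
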